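/- Vanishing of a strongly-signed twistor coordinate forces non-coindependence: let k, m, n be positive integers with k + m ≤ n, let I ⊆ {1,…,n} with |I| = m, and let M be a collection of k-element subsets of {1,…,n}. Suppose there is a sign s ∈ {+1,−1} such that ε(J,I) = s for every J ∈ M with J ∩ I = ∅ (this is the content of the twistor ⟪I⟫ having a strong sign on the positroid cell with bases M). Let C be a totally nonnegative k×n real matrix with ⟨J⟩_C = 0 for every k-element subset J ∉ M. If there exists Z ∈ Mat^{>0}_{n,k+m} with ⟪I⟫_{C,Z} = 0, then ⟨J⟩_C = 0 for every k-element subset J ⊆ {1,…,n}∖I; in other words, I is not coindependent for C. -/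

import Mathlib

open Finset

/-- The `k × k` minor `⟨J⟩_C` of a `k × n` matrix `C` on the columns indexed by `J`,
taken in increasing order (junk value `0` if `J.card ≠ k`). -/
noncomputable def colMinor {k n : ℕ} (C : Matrix (Fin k) (Fin n) ℝ)
    (J : Finset (Fin n)) : ℝ :=
  if h : J.card = k then (C.submatrix id ⇑(J.orderEmbOfFin h)).det else 0

/-- The `p × p` minor of an `n × p` matrix `Z` on the rows indexed by `S`,
taken in increasing order (junk value `0` if `S.card ≠ p`). -/
noncomputable def rowMinor {n p : ℕ} (Z : Matrix (Fin n) (Fin p) ℝ)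
    (S : Finset (Fin n)) : ℝ :=
  if h : S.card = p then (Z.submatrix ⇑(S.orderEmbOfFin h) id).det else 0

/-- The twistor coordinate `⟪I⟫_{C,Z}`. -/
noncomputable def twistor {k m n : ℕ} (C : Matrix (Fin k) (Fin n) ℝ)
    (Z : Matrix (Fin n) (Fin (k + m)) ℝ) (I : Finset (Fin n)) : ℝ :=
  if h : I.card = m then
    ((Matrix.fromRows (C * Z) (Z.submatrix ⇑(I.orderEmbOfFin h) id)).submatrix
      ⇑finSumFinEquiv.symm id).det
  else 0

/-- `ε(J, I)`: the sign of the permutation sorting into increasing order the list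
consisting of the elements of `J` in increasing order followed by the elements of `I`
in increasing order. -/
noncomputable def interleavingSign {n : ℕ} (J I : Finset (Fin n)) : ℝ :=
  (-1 : ℝ) ^ ((J ×ˢ I).filter fun p => p.2 < p.1).card

noncomputable def unitRows {m n : ℕ} (I : Finset (Fin n)) (hI : I.card = m) :
    Matrix (Fin m) (Fin n) ℝ :=
  Matrix.of fun b j => if j = I.orderEmbOfFin hI b then 1 else 0

lemma embIsoSymm {n q : ℕ} (S : Finset (Fin n)) (h : S.card = q) {c : Fin n} (hc : c ∈ S) :
    S.orderEmbOfFin h ((S.orderIsoOfFin h).symm ⟨c, hc⟩) = c := by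
  rw [← Finset.coe_orderIsoOfFin_apply, OrderIso.apply_symm_apply]

lemma det_mul_expand {p n : ℕ} (A : Matrix (Fin p) (Fin n) ℝ) (Z : Matrix (Fin n) (Fin p) ℝ) :
    (A * Z).det = ∑ f ∈ Fintype.piFinset (fun _ : Fin p => (univ : Finset (Fin n))),
      (∏ i, A i (f i)) * (Z.submatrix f id).det := by
  have h0 : (A * Z).det
      = Matrix.detRowAlternating (fun i => ∑ j : Fin n, A i j • Z j) := by
    congr 1
    ext i t
    simp [Matrix.mul_apply, Finset.sum_apply]
  rw [h0, ← AlternatingMap.coe_multilinearMap]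
  rw [(Matrix.detRowAlternating : _).toMultilinearMap.map_sum_finset
    (fun i j => A i j • Z j) (fun _ => (univ : Finset (Fin n)))]
  refine Finset.sum_congr rfl fun f _ => ?_
  rw [(Matrix.detRowAlternating : _).toMultilinearMap.map_smul_univ
    (fun i => A i (f i)) (fun i => Z (f i))]
  simp only [smul_eq_mul, Matrix.det]
  congr 1 with i j

lemma sum_injective_fiber {p n : ℕ} (S : Finset (Fin n)) (hS : S.card = p)
    (T : (Fin p → Fin n) → ℝ) :
    ∑ f ∈ ((Fintype.piFinset fun _ : Fin p => (univ : Finset (Fin n))).filter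
        (fun f => Function.Injective f)).filter (fun f => Finset.image f univ = S), T f
      = ∑ σ : Equiv.Perm (Fin p), T (⇑(S.orderEmbOfFin hS) ∘ σ) := by
  have hmem : ∀ f, f ∈ ((Fintype.piFinset fun _ : Fin p => (univ : Finset (Fin n))).filter
      (fun f => Function.Injective f)).filter (fun f => Finset.image f univ = S) →
      Function.Injective f ∧ Finset.image f univ = S := by
    intro f hf
    simp only [Finset.mem_filter] at hf
    exact ⟨hf.1.2, hf.2⟩
  have hfS : ∀ f (_ : Function.Injective f) (_ : Finset.image f univ = S) (i : Fin p),
      f i ∈ S := by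
    intro f _ himg i
    rw [← himg]; exact Finset.mem_image_of_mem f (Finset.mem_univ i)
  refine Finset.sum_bij' (fun f hf => Equiv.ofBijective
      (fun i => (S.orderIsoOfFin hS).symm ⟨f i, hfS f (hmem f hf).1 (hmem f hf).2 i⟩)
      (Finite.injective_iff_bijective.1 (fun a b hab => (hmem f hf).1
        (Subtype.mk_eq_mk.1 ((S.orderIsoOfFin hS).symm.injective hab)))))
    (fun σ _ => ⇑(S.orderEmbOfFin hS) ∘ σ) (fun _ _ => Finset.mem_univ _) ?_ ?_ ?_ ?_
  · intro σ _
    simp only [Finset.mem_filter]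
    refine ⟨⟨by simp, (S.orderEmbOfFin hS).injective.comp σ.injective⟩, ?_⟩
    have h1 : Finset.image (⇑(S.orderEmbOfFin hS) ∘ ⇑σ) univ
        = Finset.image (⇑(S.orderEmbOfFin hS)) (Finset.image (⇑σ) univ) := by
      rw [Finset.image_image]
    rw [h1, Finset.image_univ_equiv]
    refine Finset.eq_of_subset_of_card_le ?_ ?_
    · intro x hx
      obtain ⟨i, _, rfl⟩ := Finset.mem_image.1 hx
      exact S.orderEmbOfFin_mem hS i
    · rw [Finset.card_image_of_injective _ (S.orderEmbOfFin hS).injective]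
      simp [hS]
  · intro f hf
    funext i
    show (S.orderEmbOfFin hS) ((S.orderIsoOfFin hS).symm ⟨f i, _⟩) = f i
    rw [← Finset.coe_orderIsoOfFin_apply]
    rw [OrderIso.apply_symm_apply]
  · intro σ _
    apply Equiv.ext
    intro i
    show ((S.orderIsoOfFin hS).symm ⟨(S.orderEmbOfFin hS) (σ i), _⟩ : Fin p) = σ i
    rw [OrderIso.symm_apply_eq]
    ext
    rw [Finset.coe_orderIsoOfFin_apply]
  · intro f hf
    have : ⇑(S.orderEmbOfFin hS) ∘ (fun i => ((S.orderIsoOfFin hS).symm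
        ⟨f i, hfS f (hmem f hf).1 (hmem f hf).2 i⟩ : Fin p)) = f := by
      funext i
      show (S.orderEmbOfFin hS) ((S.orderIsoOfFin hS).symm ⟨f i, _⟩) = f i
      rw [← Finset.coe_orderIsoOfFin_apply, OrderIso.apply_symm_apply]
    exact congrArg T this.symm

theorem cauchyBinet {p n : ℕ} (A : Matrix (Fin p) (Fin n) ℝ) (Z : Matrix (Fin n) (Fin p) ℝ) :
    (A * Z).det = ∑ S ∈ Finset.powersetCard p (univ : Finset (Fin n)),
      colMinor A S * rowMinor Z S := by
  rw [det_mul_expand]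
  have h2 : ∑ f ∈ Fintype.piFinset (fun _ : Fin p => (univ : Finset (Fin n))),
        (∏ i, A i (f i)) * (Z.submatrix f id).det
      = ∑ f ∈ (Fintype.piFinset (fun _ : Fin p => (univ : Finset (Fin n)))).filter
          (fun f => Function.Injective f),
        (∏ i, A i (f i)) * (Z.submatrix f id).det := by
    rw [Finset.sum_filter_of_ne]
    intro f _ hne
    by_contra hinj
    rw [Function.not_injective_iff] at hinj
    obtain ⟨a, b, hab, hne'⟩ := hinj
    exact hne (by rw [Matrix.det_zero_of_row_eq hne' (by ext j; simp [hab]), mul_zero])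
  rw [h2]
  rw [← Finset.sum_fiberwise_of_maps_to (g := fun f => Finset.image f univ)
    (t := Finset.powersetCard p (univ : Finset (Fin n))) ?_]
  · refine Finset.sum_congr rfl fun S hS => ?_
    have hcard : S.card = p := by
      rw [Finset.mem_powersetCard] at hS
      exact hS.2
    rw [sum_injective_fiber S hcard]
    have key : ∀ σ : Equiv.Perm (Fin p),
        (∏ i, A i ((⇑(S.orderEmbOfFin hcard) ∘ σ) i)) *
          (Z.submatrix (⇑(S.orderEmbOfFin hcard) ∘ σ) id).det
        = (Equiv.Perm.sign σ : ℝ) * (∏ i, A i ((S.orderEmbOfFin hcard) (σ i))) *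
          (Z.submatrix (⇑(S.orderEmbOfFin hcard)) id).det := by
      intro σ
      have : (Z.submatrix (⇑(S.orderEmbOfFin hcard) ∘ σ) id)
          = (Z.submatrix (⇑(S.orderEmbOfFin hcard)) id).submatrix σ id := by
        rw [Matrix.submatrix_submatrix]; rfl
      rw [this, Matrix.det_permute]
      simp only [Function.comp_apply]
      ring
    rw [Finset.sum_congr rfl fun σ _ => key σ, ← Finset.sum_mul]
    have hdet : ∑ σ : Equiv.Perm (Fin p),
        (Equiv.Perm.sign σ : ℝ) * ∏ i, A i ((S.orderEmbOfFin hcard) (σ i))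
        = (A.submatrix id ⇑(S.orderEmbOfFin hcard)).det := by
      rw [← Matrix.det_transpose, Matrix.det_apply']
      refine Finset.sum_congr rfl fun σ _ => ?_
      congr 1
    rw [hdet, colMinor, rowMinor, dif_pos hcard, dif_pos hcard]
  · intro f hf
    rw [Finset.mem_filter] at hf
    rw [Finset.mem_powersetCard]
    exact ⟨Finset.subset_univ _, by rw [Finset.card_image_of_injective _ hf.2]; simp⟩

lemma sign_eq_signAux {q : ℕ} (σ : Equiv.Perm (Fin q)) :
    Equiv.Perm.sign σ = Equiv.Perm.signAux σ := by
  refine Equiv.Perm.swap_induction_on σ ?_ ?_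
  · rw [Equiv.Perm.sign_one, Equiv.Perm.signAux_one]
  · intro g x y hxy ih
    rw [Equiv.Perm.sign_mul, Equiv.Perm.signAux_mul, ih, Equiv.Perm.sign_swap hxy,
      Equiv.Perm.signAux_swap hxy]

lemma sign_eq_pow_inversions {q : ℕ} (σ : Equiv.Perm (Fin q)) :
    (Equiv.Perm.sign σ : ℝ) = (-1 : ℝ) ^
      (((univ ×ˢ univ).filter fun x : Fin q × Fin q => x.2 < x.1 ∧ σ x.1 < σ x.2).card) := by
  have h1 : Equiv.Perm.sign σ = (-1 : ℤˣ) ^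
      (((Equiv.Perm.finPairsLT q).filter fun x => σ x.1 ≤ σ x.2).card) := by
    rw [sign_eq_signAux]
    show (∏ x ∈ Equiv.Perm.finPairsLT q, if σ x.1 ≤ σ x.2 then (-1 : ℤˣ) else 1) = _
    rw [Finset.prod_ite, Finset.prod_const, Finset.prod_const, one_pow, mul_one]
  have h2 : ((Equiv.Perm.finPairsLT q).filter fun x => σ x.1 ≤ σ x.2).card
      = ((univ ×ˢ univ).filter fun x : Fin q × Fin q => x.2 < x.1 ∧ σ x.1 < σ x.2).card := by
    refine Finset.card_bij (fun a _ => (a.1, a.2)) ?_ ?_ ?_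
    · intro a ha
      rw [Finset.mem_filter] at ha
      have hlt := Equiv.Perm.mem_finPairsLT.1 ha.1
      rw [Finset.mem_filter, Finset.mem_product]
      refine ⟨⟨mem_univ _, mem_univ _⟩, hlt, lt_of_le_of_ne ha.2 ?_⟩
      intro h
      simp only at h
      exact (ne_of_gt hlt) (σ.injective h)
    · intro a ha b hb hab
      obtain ⟨a1, a2⟩ := a; obtain ⟨b1, b2⟩ := b
      simp only [Prod.mk.injEq] at hab
      simp [hab.1, hab.2]
    · intro b hb
      rw [Finset.mem_filter, Finset.mem_product] at hb
      refine ⟨⟨b.1, b.2⟩, ?_, rfl⟩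
      rw [Finset.mem_filter]
      exact ⟨Equiv.Perm.mem_finPairsLT.2 hb.2.1, le_of_lt hb.2.2⟩
  rw [h1, h2]
  push_cast
  rfl

lemma twistor_eq_det {k m n : ℕ} (C : Matrix (Fin k) (Fin n) ℝ)
    (Z : Matrix (Fin n) (Fin (k + m)) ℝ) (I : Finset (Fin n)) (hI : I.card = m) :
    twistor C Z I =
      (((Matrix.fromRows C (unitRows I hI)).submatrix ⇑finSumFinEquiv.symm id) * Z).det := by
  rw [twistor, dif_pos hI]
  have h1 : (Matrix.fromRows C (unitRows I hI)).submatrix (⇑finSumFinEquiv.symm) id * Z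
      = ((Matrix.fromRows C (unitRows I hI)) * Z).submatrix (⇑finSumFinEquiv.symm) id := by
    have := Matrix.submatrix_mul_equiv (Matrix.fromRows C (unitRows I hI)) Z
      (⇑finSumFinEquiv.symm) (Equiv.refl (Fin n)) id
    simpa using this
  rw [h1, Matrix.fromRows_mul]
  have h2 : unitRows I hI * Z = Z.submatrix ⇑(I.orderEmbOfFin hI) id := by
    ext b j
    simp [Matrix.mul_apply, unitRows, ite_mul]
  rw [h2]

lemma colMinor_unitAug_not_subset {k m n : ℕ} (C : Matrix (Fin k) (Fin n) ℝ)
    (I : Finset (Fin n)) (hI : I.card = m) (S : Finset (Fin n)) (hS : S.card = k + m)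
    (hns : ¬ I ⊆ S) :
    colMinor ((Matrix.fromRows C (unitRows I hI)).submatrix ⇑finSumFinEquiv.symm id) S = 0 := by
  rw [colMinor, dif_pos hS]
  obtain ⟨i, hiI, hiS⟩ := Finset.not_subset.1 hns
  set b := (I.orderIsoOfFin hI).symm ⟨i, hiI⟩
  apply Matrix.det_eq_zero_of_row_eq_zero (finSumFinEquiv (Sum.inr b))
  intro j
  show (Matrix.fromRows C (unitRows I hI)) (finSumFinEquiv.symm (finSumFinEquiv (Sum.inr b)))
    (S.orderEmbOfFin hS j) = 0
  rw [Equiv.symm_apply_apply]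
  show unitRows I hI b (S.orderEmbOfFin hS j) = 0
  rw [unitRows, Matrix.of_apply, if_neg]
  intro h
  rw [embIsoSymm I hI hiI] at h
  exact hiS (h ▸ S.orderEmbOfFin_mem hS j)

lemma colMinor_unitAug {k m n : ℕ} (C : Matrix (Fin k) (Fin n) ℝ)
    (J I : Finset (Fin n)) (hJ : J.card = k) (hI : I.card = m) (hdisj : Disjoint J I) :
    colMinor ((Matrix.fromRows C (unitRows I hI)).submatrix ⇑finSumFinEquiv.symm id) (J ∪ I)
      = interleavingSign J I * colMinor C J := by
  have hS : (J ∪ I).card = k + m := by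
    rw [Finset.card_union_of_disjoint hdisj, hJ, hI]
  set S := J ∪ I with hSdef
  set eJ := J.orderEmbOfFin hJ
  set eI := I.orderEmbOfFin hI
  set eS := S.orderEmbOfFin hS
  set u := finSumFinEquiv (m := k) (n := m)
  -- the elements of S hit by the sum-elim map
  have hmemS : ∀ z : Fin k ⊕ Fin m, Sum.elim ⇑eJ ⇑eI z ∈ S := by
    intro z
    cases z with
    | inl a => exact Finset.mem_union_left _ (J.orderEmbOfFin_mem hJ a)
    | inr b => exact Finset.mem_union_right _ (I.orderEmbOfFin_mem hI b)
  have helim_inj : Function.Injective (Sum.elim ⇑eJ ⇑eI) := by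
    intro z z' h
    cases z with
    | inl a => cases z' with
      | inl a' =>
        simp only [Sum.elim_inl] at h
        exact congrArg Sum.inl (eJ.injective h)
      | inr b' =>
        exfalso
        simp only [Sum.elim_inl, Sum.elim_inr] at h
        exact Finset.disjoint_left.1 hdisj (h ▸ J.orderEmbOfFin_mem hJ a)
          (I.orderEmbOfFin_mem hI b')
    | inr b => cases z' with
      | inl a' =>
        exfalso
        simp only [Sum.elim_inl, Sum.elim_inr] at h
        exact Finset.disjoint_left.1 hdisj (J.orderEmbOfFin_mem hJ a')
          (h ▸ I.orderEmbOfFin_mem hI b)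
      | inr b' =>
        simp only [Sum.elim_inr] at h
        exact congrArg Sum.inr (eI.injective h)
  -- the permutation
  set g : Fin (k + m) → Fin (k + m) := fun x =>
    (S.orderIsoOfFin hS).symm ⟨Sum.elim ⇑eJ ⇑eI (u.symm x), hmemS _⟩ with hgdef
  have hginj : Function.Injective g := by
    intro x y hxy
    have h1 := (S.orderIsoOfFin hS).symm.injective hxy
    have h2 : Sum.elim ⇑eJ ⇑eI (u.symm x) = Sum.elim ⇑eJ ⇑eI (u.symm y) :=
      Subtype.mk_eq_mk.1 h1
    exact u.symm.injective (helim_inj h2)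
  set τ : Equiv.Perm (Fin (k + m)) :=
    Equiv.ofBijective g (Finite.injective_iff_bijective.1 hginj) with hτdef
  have hkey : ∀ z : Fin k ⊕ Fin m, eS (τ (u z)) = Sum.elim ⇑eJ ⇑eI z := by
    intro z
    show eS (g (u z)) = _
    rw [hgdef]
    simp only [Equiv.symm_apply_apply]
    exact embIsoSymm S hS (hmemS z)
  have hlt : ∀ z z' : Fin k ⊕ Fin m,
      (τ (u z) < τ (u z') ↔ Sum.elim ⇑eJ ⇑eI z < Sum.elim ⇑eJ ⇑eI z') := by
    intro z z'
    show g (u z) < g (u z') ↔ _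
    rw [hgdef]
    simp only [Equiv.symm_apply_apply]
    rw [OrderIso.lt_iff_lt]
    exact Subtype.mk_lt_mk
  -- determinant computation
  have hs2 : (Equiv.Perm.sign τ : ℝ) * (Equiv.Perm.sign τ : ℝ) = 1 := by
    have := Int.units_mul_self (Equiv.Perm.sign τ)
    have h2 : ((Equiv.Perm.sign τ * Equiv.Perm.sign τ : ℤˣ) : ℝ) = ((1 : ℤˣ) : ℝ) := by
      rw [this]
    push_cast at h2
    exact h2
  have hblocks : ((((Matrix.fromRows C (unitRows I hI)).submatrix ⇑finSumFinEquiv.symm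
        id).submatrix id ⇑eS).submatrix id ⇑τ)
      = (Matrix.fromBlocks (C.submatrix id ⇑eJ) (C.submatrix id ⇑eI) 0
          (1 : Matrix (Fin m) (Fin m) ℝ)).submatrix ⇑u.symm ⇑u.symm := by
    ext x j
    simp only [Matrix.submatrix_apply, id_eq]
    have hx : x = u (u.symm x) := by simp
    have hj : eS (τ j) = Sum.elim ⇑eJ ⇑eI (u.symm j) := by
      conv_lhs => rw [show j = u (u.symm j) by simp]
      exact hkey _
    rw [hj]
    cases h1 : u.symm x with
    | inl a =>
      cases h2 : u.symm j with
      | inl a' => simp [Matrix.fromRows, h1, h2]; rfl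
      | inr b' => simp [Matrix.fromRows, h1, h2]; rfl
    | inr b =>
      cases h2 : u.symm j with
      | inl a' =>
        simp only [Sum.elim_inl, Sum.elim_inr, Matrix.fromRows, Matrix.of_apply,
          Matrix.fromBlocks_apply₂₁, unitRows]
        show (if eJ a' = eI b then (1:ℝ) else 0) = 0
        rw [if_neg]
        intro h
        exact Finset.disjoint_left.1 hdisj (h ▸ J.orderEmbOfFin_mem hJ a')
          (I.orderEmbOfFin_mem hI b)
      | inr b' =>
        simp only [Sum.elim_inr, Matrix.fromRows, Matrix.of_apply,
          Matrix.fromBlocks_apply₂₂, unitRows, Matrix.one_apply]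
        show (if eI b' = eI b then (1:ℝ) else 0) = (if b = b' then 1 else 0)
        by_cases hbb : b' = b
        · rw [if_pos (show eI b' = eI b by rw [hbb]), if_pos hbb.symm]
        · rw [if_neg (fun h => hbb (eI.injective h)), if_neg (Ne.symm hbb)]
  have hdet1 : colMinor ((Matrix.fromRows C (unitRows I hI)).submatrix ⇑finSumFinEquiv.symm id) S
      = (Equiv.Perm.sign τ : ℝ) * colMinor C J := by
    rw [colMinor, dif_pos hS]
    have hperm := Matrix.det_permute' τ
      (((Matrix.fromRows C (unitRows I hI)).submatrix ⇑finSumFinEquiv.symm id).submatrix id ⇑eS)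
    rw [hblocks] at hperm
    have hdb : ((Matrix.fromBlocks (C.submatrix id ⇑eJ) (C.submatrix id ⇑eI) 0
        (1 : Matrix (Fin m) (Fin m) ℝ)).submatrix ⇑u.symm ⇑u.symm).det
        = (C.submatrix id ⇑eJ).det := by
      rw [Matrix.det_submatrix_equiv_self u.symm, Matrix.det_fromBlocks_zero₂₁]
      simp
    rw [hdb] at hperm
    -- hperm : det(CJ blocks) = sign τ * det (big)
    have := congrArg (fun t => (Equiv.Perm.sign τ : ℝ) * t) hperm
    rw [← mul_assoc, hs2, one_mul] at this
    rw [← this, colMinor, dif_pos hJ]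
  -- sign computation
  have hsign : (Equiv.Perm.sign τ : ℝ) = interleavingSign J I := by
    rw [sign_eq_pow_inversions, interleavingSign]
    congr 1
    refine Finset.card_bij (fun x _ => (eS (τ x.2), eS (τ x.1))) ?_ ?_ ?_
    · rintro ⟨x1, x2⟩ hx
      rw [Finset.mem_filter] at hx
      obtain ⟨-, hord, hinv⟩ := hx
      dsimp only at hord hinv ⊢
      obtain ⟨z1, rfl⟩ : ∃ z, u z = x1 := ⟨u.symm x1, by simp⟩
      obtain ⟨z2, rfl⟩ : ∃ z, u z = x2 := ⟨u.symm x2, by simp⟩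
      rw [hlt] at hinv
      -- z1 must be inr, z2 must be inl
      cases z1 with
      | inl a1 =>
        cases z2 with
        | inl a2 =>
          exfalso
          have ha : a2 < a1 := by
            have h1 : (u (Sum.inl a2)).val = a2.val := by simp [u]
            have h2 : (u (Sum.inl a1)).val = a1.val := by simp [u]
            rw [Fin.lt_def] at hord ⊢
            omega
          simp only [Sum.elim_inl] at hinv
          have := eJ.strictMono ha
          exact absurd hinv (not_lt.2 (le_of_lt this))
        | inr b2 =>
          exfalso
          have : (u (Sum.inl a1)).val < k := by simp [u]
          have h2 : k ≤ (u (Sum.inr b2)).val := by simp [u]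
          rw [Fin.lt_def] at hord
          omega
      | inr b1 =>
        cases z2 with
        | inl a2 =>
          simp only [Sum.elim_inl, Sum.elim_inr] at hinv
          rw [Finset.mem_filter, Finset.mem_product]
          rw [hkey, hkey]
          exact ⟨⟨J.orderEmbOfFin_mem hJ a2, I.orderEmbOfFin_mem hI b1⟩, hinv⟩
        | inr b2 =>
          exfalso
          have hb : b2 < b1 := by
            have h1 : (u (Sum.inr b2)).val = k + b2.val := by simp [u]
            have h2 : (u (Sum.inr b1)).val = k + b1.val := by simp [u]
            rw [Fin.lt_def] at hord ⊢
            omega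
          simp only [Sum.elim_inr] at hinv
          exact absurd hinv (not_lt.2 (le_of_lt (eI.strictMono hb)))
    · intro x hx y hy hxy
      simp only [Prod.mk.injEq] at hxy
      have h1 : τ x.2 = τ y.2 := eS.injective hxy.1
      have h2 : τ x.1 = τ y.1 := eS.injective hxy.2
      exact Prod.ext (τ.injective h2) (τ.injective h1)
    · intro q hq
      rw [Finset.mem_filter, Finset.mem_product] at hq
      obtain ⟨⟨hqJ, hqI⟩, hqlt⟩ := hq
      set a := (J.orderIsoOfFin hJ).symm ⟨q.1, hqJ⟩
      set b := (I.orderIsoOfFin hI).symm ⟨q.2, hqI⟩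
      refine ⟨(u (Sum.inr b), u (Sum.inl a)), ?_, ?_⟩
      · rw [Finset.mem_filter, Finset.mem_product]
        refine ⟨⟨mem_univ _, mem_univ _⟩, ?_, ?_⟩
        · show u (Sum.inl a) < u (Sum.inr b)
          rw [Fin.lt_def]
          have h1 : (u (Sum.inl a)).val < k := by simp [u]
          have h2 : k ≤ (u (Sum.inr b)).val := by simp [u]
          omega
        · rw [hlt]
          simp only [Sum.elim_inl, Sum.elim_inr]
          show eI b < eJ a
          rw [show eI b = q.2 from embIsoSymm I hI hqI, show eJ a = q.1 from embIsoSymm J hJ hqJ]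
          exact hqlt
      · simp only
        rw [hkey, hkey]
        simp only [Sum.elim_inl, Sum.elim_inr]
        rw [show eJ a = q.1 from embIsoSymm J hJ hqJ, show eI b = q.2 from embIsoSymm I hI hqI]
  rw [hdet1, hsign]

/-- If the twistor `⟪I⟫` has a strong sign on the positroid cell with bases `M`
(i.e. `ε(J, I)` is a constant sign `s` over all `J ∈ M` disjoint from `I`), `C` is a
totally nonnegative matrix whose `k × k` minors vanish outside `M`, and `⟪I⟫_{C,Z} = 0`
for some totally positive `Z`, then every `k × k` minor of `C` on columns disjoint
from `I` vanishes; i.e. `I` is not coindependent for `C`. -/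
theorem twistor_strong_sign_vanishing (k m n : ℕ) (hk : 0 < k) (hm : 0 < m)
    (hn : k + m ≤ n) (I : Finset (Fin n)) (hI : I.card = m)
    (M : Set (Finset (Fin n))) (hM : ∀ J ∈ M, J.card = k)
    (s : ℝ) (hs : s = 1 ∨ s = -1)
    (hsign : ∀ J ∈ M, Disjoint J I → interleavingSign J I = s)
    (C : Matrix (Fin k) (Fin n) ℝ)
    (hC : ∀ J : Finset (Fin n), J.card = k → 0 ≤ colMinor C J)
    (hCM : ∀ J : Finset (Fin n), J.card = k → J ∉ M → colMinor C J = 0)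
    (hZ : ∃ Z : Matrix (Fin n) (Fin (k + m)) ℝ,
      (∀ S : Finset (Fin n), S.card = k + m → 0 < rowMinor Z S) ∧ twistor C Z I = 0) :
    ∀ J : Finset (Fin n), J.card = k → Disjoint J I → colMinor C J = 0 := by
  intro J hJ hdisjJI
  obtain ⟨Z, hZpos, hZt⟩ := hZ
  have htw := twistor_eq_det C Z I hI
  rw [hZt] at htw
  set A' := (Matrix.fromRows C (unitRows I hI)).submatrix ⇑finSumFinEquiv.symm id with hA'def
  have hCB := cauchyBinet A' Z
  have hzero : ∑ S ∈ Finset.powersetCard (k + m) (univ : Finset (Fin n)),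
      s * (colMinor A' S * rowMinor Z S) = 0 := by
    rw [← Finset.mul_sum, ← hCB, ← htw, mul_zero]
  have hnonneg : ∀ S ∈ Finset.powersetCard (k + m) (univ : Finset (Fin n)),
      0 ≤ s * (colMinor A' S * rowMinor Z S) := by
    intro S hSmem
    have hcard : S.card = k + m := (Finset.mem_powersetCard.1 hSmem).2
    by_cases hsub : I ⊆ S
    · have hJS : (S \ I).card = k := by
        rw [Finset.card_sdiff_of_subset hsub, hcard, hI]
        omega
      have hdisj2 : Disjoint (S \ I) I := Finset.sdiff_disjoint
      have hSeq : (S \ I) ∪ I = S := Finset.sdiff_union_of_subset hsub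
      have hcm : colMinor A' S = interleavingSign (S \ I) I * colMinor C (S \ I) := by
        rw [hA'def]
        conv_lhs => rw [← hSeq]
        exact colMinor_unitAug C (S \ I) I hJS hI hdisj2
      rw [hcm]
      by_cases hMem : (S \ I) ∈ M
      · rw [hsign _ hMem hdisj2]
        have h1 : s * (s * colMinor C (S \ I) * rowMinor Z S)
            = colMinor C (S \ I) * rowMinor Z S := by
          rcases hs with h | h <;> rw [h] <;> ring
        rw [h1]
        exact mul_nonneg (hC _ hJS) (le_of_lt (hZpos S hcard))
      · rw [hCM _ hJS hMem]
        simp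
    · rw [hA'def, colMinor_unitAug_not_subset C I hI S hcard hsub]
      simp
  have hall := (Finset.sum_eq_zero_iff_of_nonneg hnonneg).1 hzero
  have hS0card : (J ∪ I).card = k + m := by
    rw [Finset.card_union_of_disjoint hdisjJI, hJ, hI]
  have hS0 : (J ∪ I) ∈ Finset.powersetCard (k + m) (univ : Finset (Fin n)) :=
    Finset.mem_powersetCard.2 ⟨Finset.subset_univ _, hS0card⟩
  have h0 := hall _ hS0
  rw [hA'def, colMinor_unitAug C J I hJ hI hdisjJI] at h0
  by_cases hMem : J ∈ M
  · rw [hsign J hMem hdisjJI] at h0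
    have hrow := hZpos (J ∪ I) hS0card
    have hss : s * s = 1 := by rcases hs with h | h <;> rw [h] <;> norm_num
    have hprod : colMinor C J * rowMinor Z (J ∪ I) = 0 := by
      rw [show s * (s * colMinor C J * rowMinor Z (J ∪ I))
        = s * s * (colMinor C J * rowMinor Z (J ∪ I)) by ring, hss, one_mul] at h0
      exact h0
    rcases mul_eq_zero.1 hprod with h | h
    · exact h
    · exact absurd h (ne_of_gt hrow)
  · exact hCM J hJ hMem
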